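/- Let t, r, x be positive integers with x < r, and let 𝒯 be a K_{x+1}^p-free p-uniform hypergraph. Then the p-uniform hypergraph K_{t(r−x)−1}^p + 𝒯 (obtained by adding a set C of t(r−x)−1 new vertices, all p-subsets of C, and all p-sets meeting both C and V(𝒯)) contains no t pairwise vertex-disjoint copies of K_r^p. -/
import Mathlib


/-- `S` spans a copy of `K_k^p` in the hypergraph with hyperedge set `E`. -/
def IsHClique {V : Type*} (E : Set (Finset V)) (p k : ℕ) (S : Finset V) : Prop :=
  S.card = k ∧ ∀ e ⊆ S, e.card = p → e ∈ E

/-- The hypergraph with hyperedge set `E` has no `t` pairwise vertex-disjoint copies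
of `K_r^p`. -/
def HTKrFree {V : Type*} (E : Set (Finset V)) (t p r : ℕ) : Prop :=
  ¬ ∃ f : Fin t → Finset V, (∀ i, IsHClique E p r (f i)) ∧
    ∀ i j : Fin t, i ≠ j → Disjoint (f i) (f j)

/-- The hyperedge set of the join `K_c^p + 𝒯` on `Fin c ⊕ β`: all `p`-subsets of the new
clique side, the hyperedges of `𝒯`, and all `p`-sets meeting both sides. -/
def hJoinEdges {β : Type*} [DecidableEq β] (c p : ℕ) (E : Set (Finset β)) :
    Set (Finset (Fin c ⊕ β)) :=
  {e | e.card = p ∧ ((∀ v ∈ e, v.isLeft = true) ∨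
    (∃ e₀ ∈ E, e = e₀.image Sum.inr) ∨
    ((∃ v ∈ e, v.isLeft = true) ∧ (∃ v ∈ e, v.isRight = true)))}

/-- Let t, r, x be positive integers with x < r, and let 𝒯 be a
K_{x+1}^p-free p-uniform hypergraph. Then the p-uniform hypergraph K_{t(r−x)−1}^p + 𝒯
contains no t pairwise vertex-disjoint copies of K_r^p. -/
theorem hJoin_tKrp_free {β : Type*} [DecidableEq β] (p t r x : ℕ)
    (hp : 1 ≤ p) (ht : 1 ≤ t) (hx : 1 ≤ x) (hxr : x < r)
    (E : Set (Finset β)) (hunif : ∀ e ∈ E, e.card = p)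
    (hfree : ¬ ∃ S : Finset β, IsHClique E p (x + 1) S) :
    HTKrFree (hJoinEdges (t * (r - x) - 1) p E) t p r := by
  rintro ⟨f, hcl, hdisj⟩
  -- each right part has card ≤ x
  have hright : ∀ i, (f i).toRight.card ≤ x := by
    intro i
    by_contra h
    push_neg at h
    obtain ⟨S, hSsub, hScard⟩ := Finset.exists_subset_card_eq (show x + 1 ≤ (f i).toRight.card from h)
    apply hfree
    refine ⟨S, hScard, ?_⟩
    intro e he hecard
    have hsub : e.image Sum.inr ⊆ f i := by
      intro v hv
      simp only [Finset.mem_image] at hv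
      obtain ⟨a, ha, rfl⟩ := hv
      have := hSsub (he ha)
      simpa using this
    have hcard : (e.image (Sum.inr : β → Fin (t*(r-x)-1) ⊕ β)).card = p := by
      rw [Finset.card_image_of_injective (f := (Sum.inr : β → Fin (t*(r-x)-1) ⊕ β)) _ Sum.inr_injective, hecard]
    have hmem := (hcl i).2 _ hsub hcard
    obtain ⟨-, h1 | h2 | h3⟩ := hmem
    · exfalso
      have : e.Nonempty := Finset.card_pos.mp (by omega)
      obtain ⟨a, ha⟩ := this
      have := h1 (Sum.inr a) (Finset.mem_image_of_mem _ ha)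
      simp at this
    · obtain ⟨e₀, he₀, heq⟩ := h2
      have : e = e₀ := Finset.image_injective Sum.inr_injective heq
      rwa [this]
    · exfalso
      obtain ⟨⟨v, hv, hvl⟩, -⟩ := h3
      simp only [Finset.mem_image] at hv
      obtain ⟨a, -, rfl⟩ := hv
      simp at hvl
  -- each left part has card ≥ r - x
  have hleft : ∀ i, r - x ≤ (f i).toLeft.card := by
    intro i
    have h1 := Finset.card_toLeft_add_card_toRight (u := f i)
    have h2 := (hcl i).1
    have := hright i
    omega
  -- left parts are pairwise disjoint subsets of Fin c
  have hdisjL : ∀ i ∈ (Finset.univ : Finset (Fin t)), ∀ j ∈ Finset.univ, i ≠ j →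
      Disjoint (f i).toLeft (f j).toLeft := by
    intro i _ j _ hij
    have := hdisj i j hij
    rw [Finset.disjoint_left] at this ⊢
    intro a ha hb
    exact this (Finset.mem_toLeft.mp ha) (Finset.mem_toLeft.mp hb)
  have hcard := Finset.card_biUnion hdisjL
  have hle : (Finset.univ.biUnion fun i => (f i).toLeft).card ≤ t * (r - x) - 1 := by
    calc _ ≤ (Finset.univ : Finset (Fin (t * (r - x) - 1))).card := Finset.card_le_card (Finset.subset_univ _)
    _ = t * (r - x) - 1 := by simp
  have hge : t * (r - x) ≤ ∑ i : Fin t, (f i).toLeft.card := by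
    calc t * (r - x) = ∑ _i : Fin t, (r - x) := by simp [mul_comm]
    _ ≤ _ := Finset.sum_le_sum fun i _ => hleft i
  have hrx : 1 ≤ r - x := by omega
  have : 1 ≤ t * (r - x) := Nat.one_le_iff_ne_zero.mpr (by positivity)
  omega
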